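/- Let Y₁ and Y₂ be i.i.d. random vectors in ℝ^d with mean μ, covariance Σ = E[(Y-μ)(Y-μ)ᵀ], and E‖Y - μ‖₂⁴ < ∞. Set H = (Y₁ - Y₂)(Y₁ - Y₂)ᵀ/2, so E[H] = Σ. Then E[(H - Σ)²] = (1/2)( E[((Y-μ)(Y-μ)ᵀ)²] + tr(Σ)·Σ ), where Y is distributed as Y₁. -/

import Mathlib

open Matrix MeasureTheory ProbabilityTheory
open scoped ENNReal

section Helpers

variable {Ω : Type*} [MeasurableSpace Ω] {μ : Measure Ω}

private lemma half_eq : (1:ℝ≥0∞)/2 = 1/4 + 1/4 := by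
  rw [ENNReal.div_add_div_same]
  rw [show (4:ℝ≥0∞) = 2*2 by norm_num, ENNReal.div_eq_div_iff] <;> norm_num

private lemma one_eq : (1:ℝ≥0∞)/1 = 1/2 + 1/2 := by
  rw [ENNReal.div_add_div_same, one_div_one,
    show (1:ℝ≥0∞)+1 = 2 by norm_num, ENNReal.div_self] <;> norm_num

lemma memℒp2_mul_of_memℒp4 {f g : Ω → ℝ} (hf : MemLp f 4 μ) (hg : MemLp g 4 μ) :
    MemLp (fun ω => f ω * g ω) 2 μ := by
  have h := hg.smul (r := 2) hf (hpqr := ⟨by simpa only [one_div] using half_eq.symm⟩)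
  have e : (f • g) = fun ω => f ω * g ω := by funext ω; simp [smul_eq_mul]
  rwa [e] at h

lemma integrable_mul_of_memℒp2 {f g : Ω → ℝ} (hf : MemLp f 2 μ) (hg : MemLp g 2 μ) :
    Integrable (fun ω => f ω * g ω) μ := by
  have h := hg.smul (r := 1) hf (hpqr := ⟨by simpa only [one_div] using one_eq.symm⟩)
  have e : (f • g) = fun ω => f ω * g ω := by funext ω; simp [smul_eq_mul]
  rw [e] at h
  exact memLp_one_iff_integrable.mp h

lemma integrable_mul4 {f g h k : Ω → ℝ} (hf : MemLp f 4 μ) (hg : MemLp g 4 μ)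
    (hh : MemLp h 4 μ) (hk : MemLp k 4 μ) :
    Integrable (fun ω => (f ω * g ω) * (h ω * k ω)) μ :=
  integrable_mul_of_memℒp2 (memℒp2_mul_of_memℒp4 hf hg) (memℒp2_mul_of_memℒp4 hh hk)

lemma integrable_mul4B {f g h k : Ω → ℝ} (hf : MemLp f 4 μ) (hg : MemLp g 4 μ)
    (hh : MemLp h 4 μ) (hk : MemLp k 4 μ) :
    Integrable (fun ω => f ω * g ω * h ω * k ω) μ :=
  (integrable_mul4 hf hg hh hk).congr (Filter.Eventually.of_forall fun ω => by ring)

lemma integrable_mul4C {f g h k : Ω → ℝ} (hf : MemLp f 4 μ) (hg : MemLp g 4 μ)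
    (hh : MemLp h 4 μ) (hk : MemLp k 4 μ) :
    Integrable (fun ω => f ω * (g ω * h ω * k ω)) μ :=
  (integrable_mul4 hf hg hh hk).congr (Filter.Eventually.of_forall fun ω => by ring)

lemma integrable_mul2 [IsFiniteMeasure μ] {f g : Ω → ℝ} (hf : MemLp f 4 μ) (hg : MemLp g 4 μ) :
    Integrable (fun ω => f ω * g ω) μ :=
  integrable_mul_of_memℒp2 (hf.mono_exponent (by norm_num))
    (hg.mono_exponent (by norm_num))

lemma integrable_list_sum (l : List (Ω → ℝ)) (h : ∀ f ∈ l, Integrable f μ) :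
    Integrable (fun ω => (l.map (fun f => f ω)).sum) μ := by
  induction l with
  | nil => simpa using integrable_const (0:ℝ)
  | cons g t ih =>
    simp only [List.map_cons, List.sum_cons]
    exact (h g (by simp)).add (ih fun f hf => h f (List.mem_cons_of_mem _ hf))

lemma integral_list_sum (l : List (Ω → ℝ)) (h : ∀ f ∈ l, Integrable f μ) :
    ∫ ω, (l.map (fun f => f ω)).sum ∂μ = (l.map (fun f => ∫ ω, f ω ∂μ)).sum := by
  induction l with
  | nil => simp
  | cons g t ih =>
    simp only [List.map_cons, List.sum_cons]
    rw [integral_add (h g (by simp))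
      (integrable_list_sum t fun f hf => h f (List.mem_cons_of_mem _ hf)),
      ih fun f hf => h f (List.mem_cons_of_mem _ hf)]

end Helpers

theorem variance_of_covariance_kernel
    {d : ℕ} {Ω : Type*} [MeasurableSpace Ω] (μ : Measure Ω) [IsProbabilityMeasure μ]
    (Y₁ Y₂ : Ω → Fin d → ℝ)
    (hmeas₁ : Measurable Y₁) (hmeas₂ : Measurable Y₂)
    (hindep : IndepFun Y₁ Y₂ μ) (hid : IdentDistrib Y₁ Y₂ μ μ)
    (m : Fin d → ℝ) (hm : ∀ i, ∫ ω, Y₁ ω i ∂μ = m i)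
    (hL4 : ∀ i, MemLp (fun ω => Y₁ ω i) 4 μ)
    (S : Matrix (Fin d) (Fin d) ℝ)
    (hS : ∀ i j, S i j = ∫ ω, (Y₁ ω i - m i) * (Y₁ ω j - m j) ∂μ)
    (H : Ω → Matrix (Fin d) (Fin d) ℝ)
    (hH : ∀ ω, H ω = (2 : ℝ)⁻¹ • Matrix.vecMulVec (Y₁ ω - Y₂ ω) (Y₁ ω - Y₂ ω)) :
    ∀ i j,
      ∫ ω, ((H ω - S) * (H ω - S)) i j ∂μ =
        (1 / 2 : ℝ) *
          ((∫ ω, (Matrix.vecMulVec (Y₁ ω - m) (Y₁ ω - m) *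
              Matrix.vecMulVec (Y₁ ω - m) (Y₁ ω - m)) i j ∂μ) +
            S.trace * S i j) := by
  intro i j
  have hL4X : ∀ a, MemLp (fun ω => Y₁ ω a - m a) 4 μ := fun a =>
    (hL4 a).sub (memLp_const (m a))
  have hL4Y₂ : ∀ a, MemLp (fun ω => Y₂ ω a) 4 μ := fun a =>
    (hid.comp (measurable_pi_apply a)).memLp_snd (hL4 a)
  have hL4Z : ∀ a, MemLp (fun ω => Y₂ ω a - m a) 4 μ := fun a =>
    (hL4Y₂ a).sub (memLp_const (m a))
  have key : ∀ (F G : (Fin d → ℝ) → ℝ), Measurable F → Measurable G →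
      ∫ ω, F (Y₁ ω) * G (Y₂ ω) ∂μ =
        (∫ ω, F (Y₁ ω) ∂μ) * (∫ ω, G (Y₁ ω) ∂μ) := by
    intro F G hF hG
    have h1 : ∫ ω, F (Y₁ ω) * G (Y₂ ω) ∂μ =
        (∫ ω, F (Y₁ ω) ∂μ) * (∫ ω, G (Y₂ ω) ∂μ) :=
      (hindep.comp hF hG).integral_mul_eq_mul_integral
        ((hF.comp hmeas₁).aestronglyMeasurable)
        ((hG.comp hmeas₂).aestronglyMeasurable)
    have h2 : ∫ ω, G (Y₁ ω) ∂μ = ∫ ω, G (Y₂ ω) ∂μ :=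
      (hid.comp hG).integral_eq
    rw [h1, h2]
  have keyG : ∀ (G : (Fin d → ℝ) → ℝ), Measurable G →
      ∫ ω, G (Y₂ ω) ∂μ = ∫ ω, G (Y₁ ω) ∂μ := fun G hG =>
    ((hid.comp hG).integral_eq).symm
  have m0 : ∀ a, ∫ ω, (Y₁ ω a - m a) ∂μ = 0 := by
    intro a
    rw [integral_sub ((hL4 a).integrable (by norm_num)) (integrable_const _),
      hm, integral_const]
    simp
  have m2 : ∀ a b, ∫ ω, (Y₁ ω a - m a) * (Y₁ ω b - m b) ∂μ = S a b := fun a b =>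
    (hS a b).symm
  -- mixed fourth moments
  have q22 : ∀ a b c e : Fin d,
      ∫ ω, ((Y₁ ω a - m a) * (Y₁ ω b - m b)) * ((Y₂ ω c - m c) * (Y₂ ω e - m e)) ∂μ
        = S a b * S c e := by
    intro a b c e
    have h := key (fun v => (v a - m a) * (v b - m b))
      (fun v => (v c - m c) * (v e - m e)) (by fun_prop) (by fun_prop)
    simpa only [m2] using h
  have q31 : ∀ a b c e : Fin d,
      ∫ ω, (Y₁ ω a - m a) * (Y₁ ω b - m b) * (Y₁ ω c - m c) * (Y₂ ω e - m e) ∂μ = 0 := by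
    intro a b c e
    have h := key (fun v => (v a - m a) * (v b - m b) * (v c - m c))
      (fun v => v e - m e) (by fun_prop) (by fun_prop)
    simpa only [m0, mul_zero] using h
  have q13 : ∀ a b c e : Fin d,
      ∫ ω, (Y₁ ω a - m a) * ((Y₂ ω b - m b) * (Y₂ ω c - m c) * (Y₂ ω e - m e)) ∂μ = 0 := by
    intro a b c e
    have h := key (fun v => v a - m a)
      (fun v => (v b - m b) * (v c - m c) * (v e - m e)) (by fun_prop) (by fun_prop)
    simpa only [m0, zero_mul] using h
  have q4Z : ∀ a b c e : Fin d,
      ∫ ω, ((Y₂ ω a - m a) * (Y₂ ω b - m b)) * ((Y₂ ω c - m c) * (Y₂ ω e - m e)) ∂μ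
        = ∫ ω, ((Y₁ ω a - m a) * (Y₁ ω b - m b)) * ((Y₁ ω c - m c) * (Y₁ ω e - m e)) ∂μ := by
    intro a b c e
    have h := keyG (fun v => ((v a - m a) * (v b - m b)) * ((v c - m c) * (v e - m e)))
      (by fun_prop)
    simpa only [] using h
  have q2Z : ∀ a b : Fin d,
      ∫ ω, (Y₂ ω a - m a) * (Y₂ ω b - m b) ∂μ = S a b := by
    intro a b
    have h := keyG (fun v => (v a - m a) * (v b - m b)) (by fun_prop)
    simpa only [m2] using h
  have q11 : ∀ a b : Fin d,
      ∫ ω, (Y₁ ω a - m a) * (Y₂ ω b - m b) ∂μ = 0 := by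
    intro a b
    have h := key (fun v => v a - m a) (fun v => v b - m b) (by fun_prop) (by fun_prop)
    simpa only [m0, zero_mul] using h
  have hk : ∀ k : Fin d,
      ∫ ω, (H ω i k - S i k) * (H ω k j - S k j) ∂μ =
        (2:ℝ)⁻¹ * (∫ ω, ((Y₁ ω i - m i) * (Y₁ ω k - m k)) * ((Y₁ ω k - m k) * (Y₁ ω j - m j)) ∂μ)
          + (2:ℝ)⁻¹ * (S i j * S k k) := by
    intro k
    have hint : ∀ f ∈ ([fun ω => (4:ℝ)⁻¹ * (((Y₁ ω i - m i) * (Y₁ ω k - m k)) * ((Y₁ ω k - m k) * (Y₁ ω j - m j))),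
      fun ω => (4:ℝ)⁻¹ * (((Y₂ ω i - m i) * (Y₂ ω k - m k)) * ((Y₂ ω k - m k) * (Y₂ ω j - m j))),
      fun ω => (2:ℝ)⁻¹ * (((Y₁ ω i - m i) * (Y₁ ω k - m k)) * ((Y₂ ω k - m k) * (Y₂ ω j - m j))),
      fun ω => (4:ℝ)⁻¹ * (((Y₁ ω i - m i) * (Y₁ ω j - m j)) * ((Y₂ ω k - m k) * (Y₂ ω k - m k))),
      fun ω => (4:ℝ)⁻¹ * (((Y₁ ω k - m k) * (Y₁ ω k - m k)) * ((Y₂ ω i - m i) * (Y₂ ω j - m j))),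
      fun ω => (2:ℝ)⁻¹ * (((Y₁ ω k - m k) * (Y₁ ω j - m j)) * ((Y₂ ω i - m i) * (Y₂ ω k - m k))),
      fun ω => (-(4:ℝ)⁻¹) * ((Y₁ ω i - m i) * (Y₁ ω k - m k) * (Y₁ ω k - m k) * (Y₂ ω j - m j)),
      fun ω => (-(2:ℝ)⁻¹) * ((Y₁ ω i - m i) * (Y₁ ω k - m k) * (Y₁ ω j - m j) * (Y₂ ω k - m k)),
      fun ω => (-(4:ℝ)⁻¹) * ((Y₁ ω k - m k) * (Y₁ ω k - m k) * (Y₁ ω j - m j) * (Y₂ ω i - m i)),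
      fun ω => (-(4:ℝ)⁻¹) * ((Y₁ ω i - m i) * ((Y₂ ω k - m k) * (Y₂ ω k - m k) * (Y₂ ω j - m j))),
      fun ω => (-(2:ℝ)⁻¹) * ((Y₁ ω k - m k) * ((Y₂ ω i - m i) * (Y₂ ω k - m k) * (Y₂ ω j - m j))),
      fun ω => (-(4:ℝ)⁻¹) * ((Y₁ ω j - m j) * ((Y₂ ω i - m i) * (Y₂ ω k - m k) * (Y₂ ω k - m k))),
      fun ω => (-((2:ℝ)⁻¹ * S k j)) * ((Y₁ ω i - m i) * (Y₁ ω k - m k)),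
      fun ω => ((2:ℝ)⁻¹ * S k j) * ((Y₁ ω i - m i) * (Y₂ ω k - m k)),
      fun ω => ((2:ℝ)⁻¹ * S k j) * ((Y₁ ω k - m k) * (Y₂ ω i - m i)),
      fun ω => (-((2:ℝ)⁻¹ * S k j)) * ((Y₂ ω i - m i) * (Y₂ ω k - m k)),
      fun ω => (-((2:ℝ)⁻¹ * S i k)) * ((Y₁ ω k - m k) * (Y₁ ω j - m j)),
      fun ω => ((2:ℝ)⁻¹ * S i k) * ((Y₁ ω k - m k) * (Y₂ ω j - m j)),
      fun ω => ((2:ℝ)⁻¹ * S i k) * ((Y₁ ω j - m j) * (Y₂ ω k - m k)),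
      fun ω => (-((2:ℝ)⁻¹ * S i k)) * ((Y₂ ω k - m k) * (Y₂ ω j - m j)),
      fun _ => S i k * S k j] : List (Ω → ℝ)), Integrable f μ := by
      intro f hf
      fin_cases hf
      · exact (integrable_mul4 (hL4X i) (hL4X k) (hL4X k) (hL4X j)).const_mul _
      · exact (integrable_mul4 (hL4Z i) (hL4Z k) (hL4Z k) (hL4Z j)).const_mul _
      · exact (integrable_mul4 (hL4X i) (hL4X k) (hL4Z k) (hL4Z j)).const_mul _
      · exact (integrable_mul4 (hL4X i) (hL4X j) (hL4Z k) (hL4Z k)).const_mul _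
      · exact (integrable_mul4 (hL4X k) (hL4X k) (hL4Z i) (hL4Z j)).const_mul _
      · exact (integrable_mul4 (hL4X k) (hL4X j) (hL4Z i) (hL4Z k)).const_mul _
      · exact (integrable_mul4B (hL4X i) (hL4X k) (hL4X k) (hL4Z j)).const_mul _
      · exact (integrable_mul4B (hL4X i) (hL4X k) (hL4X j) (hL4Z k)).const_mul _
      · exact (integrable_mul4B (hL4X k) (hL4X k) (hL4X j) (hL4Z i)).const_mul _
      · exact (integrable_mul4C (hL4X i) (hL4Z k) (hL4Z k) (hL4Z j)).const_mul _
      · exact (integrable_mul4C (hL4X k) (hL4Z i) (hL4Z k) (hL4Z j)).const_mul _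
      · exact (integrable_mul4C (hL4X j) (hL4Z i) (hL4Z k) (hL4Z k)).const_mul _
      · exact (integrable_mul2 (hL4X i) (hL4X k)).const_mul _
      · exact (integrable_mul2 (hL4X i) (hL4Z k)).const_mul _
      · exact (integrable_mul2 (hL4X k) (hL4Z i)).const_mul _
      · exact (integrable_mul2 (hL4Z i) (hL4Z k)).const_mul _
      · exact (integrable_mul2 (hL4X k) (hL4X j)).const_mul _
      · exact (integrable_mul2 (hL4X k) (hL4Z j)).const_mul _
      · exact (integrable_mul2 (hL4X j) (hL4Z k)).const_mul _
      · exact (integrable_mul2 (hL4Z k) (hL4Z j)).const_mul _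
      · exact integrable_const _
    have hpt : (fun ω => (H ω i k - S i k) * (H ω k j - S k j))
        = fun ω => (([fun ω => (4:ℝ)⁻¹ * (((Y₁ ω i - m i) * (Y₁ ω k - m k)) * ((Y₁ ω k - m k) * (Y₁ ω j - m j))),
      fun ω => (4:ℝ)⁻¹ * (((Y₂ ω i - m i) * (Y₂ ω k - m k)) * ((Y₂ ω k - m k) * (Y₂ ω j - m j))),
      fun ω => (2:ℝ)⁻¹ * (((Y₁ ω i - m i) * (Y₁ ω k - m k)) * ((Y₂ ω k - m k) * (Y₂ ω j - m j))),
      fun ω => (4:ℝ)⁻¹ * (((Y₁ ω i - m i) * (Y₁ ω j - m j)) * ((Y₂ ω k - m k) * (Y₂ ω k - m k))),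
      fun ω => (4:ℝ)⁻¹ * (((Y₁ ω k - m k) * (Y₁ ω k - m k)) * ((Y₂ ω i - m i) * (Y₂ ω j - m j))),
      fun ω => (2:ℝ)⁻¹ * (((Y₁ ω k - m k) * (Y₁ ω j - m j)) * ((Y₂ ω i - m i) * (Y₂ ω k - m k))),
      fun ω => (-(4:ℝ)⁻¹) * ((Y₁ ω i - m i) * (Y₁ ω k - m k) * (Y₁ ω k - m k) * (Y₂ ω j - m j)),
      fun ω => (-(2:ℝ)⁻¹) * ((Y₁ ω i - m i) * (Y₁ ω k - m k) * (Y₁ ω j - m j) * (Y₂ ω k - m k)),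
      fun ω => (-(4:ℝ)⁻¹) * ((Y₁ ω k - m k) * (Y₁ ω k - m k) * (Y₁ ω j - m j) * (Y₂ ω i - m i)),
      fun ω => (-(4:ℝ)⁻¹) * ((Y₁ ω i - m i) * ((Y₂ ω k - m k) * (Y₂ ω k - m k) * (Y₂ ω j - m j))),
      fun ω => (-(2:ℝ)⁻¹) * ((Y₁ ω k - m k) * ((Y₂ ω i - m i) * (Y₂ ω k - m k) * (Y₂ ω j - m j))),
      fun ω => (-(4:ℝ)⁻¹) * ((Y₁ ω j - m j) * ((Y₂ ω i - m i) * (Y₂ ω k - m k) * (Y₂ ω k - m k))),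
      fun ω => (-((2:ℝ)⁻¹ * S k j)) * ((Y₁ ω i - m i) * (Y₁ ω k - m k)),
      fun ω => ((2:ℝ)⁻¹ * S k j) * ((Y₁ ω i - m i) * (Y₂ ω k - m k)),
      fun ω => ((2:ℝ)⁻¹ * S k j) * ((Y₁ ω k - m k) * (Y₂ ω i - m i)),
      fun ω => (-((2:ℝ)⁻¹ * S k j)) * ((Y₂ ω i - m i) * (Y₂ ω k - m k)),
      fun ω => (-((2:ℝ)⁻¹ * S i k)) * ((Y₁ ω k - m k) * (Y₁ ω j - m j)),
      fun ω => ((2:ℝ)⁻¹ * S i k) * ((Y₁ ω k - m k) * (Y₂ ω j - m j)),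
      fun ω => ((2:ℝ)⁻¹ * S i k) * ((Y₁ ω j - m j) * (Y₂ ω k - m k)),
      fun ω => (-((2:ℝ)⁻¹ * S i k)) * ((Y₂ ω k - m k) * (Y₂ ω j - m j)),
      fun _ => S i k * S k j] : List (Ω → ℝ)).map (fun f => f ω)).sum := by
      funext ω
      rw [hH]
      simp only [List.map_cons, List.map_nil, List.sum_cons, List.sum_nil,
        Matrix.smul_apply, Matrix.vecMulVec_apply, Pi.sub_apply, smul_eq_mul]
      ring
    calc ∫ ω, (H ω i k - S i k) * (H ω k j - S k j) ∂μ
        = ∫ ω, (([fun ω => (4:ℝ)⁻¹ * (((Y₁ ω i - m i) * (Y₁ ω k - m k)) * ((Y₁ ω k - m k) * (Y₁ ω j - m j))),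
      fun ω => (4:ℝ)⁻¹ * (((Y₂ ω i - m i) * (Y₂ ω k - m k)) * ((Y₂ ω k - m k) * (Y₂ ω j - m j))),
      fun ω => (2:ℝ)⁻¹ * (((Y₁ ω i - m i) * (Y₁ ω k - m k)) * ((Y₂ ω k - m k) * (Y₂ ω j - m j))),
      fun ω => (4:ℝ)⁻¹ * (((Y₁ ω i - m i) * (Y₁ ω j - m j)) * ((Y₂ ω k - m k) * (Y₂ ω k - m k))),
      fun ω => (4:ℝ)⁻¹ * (((Y₁ ω k - m k) * (Y₁ ω k - m k)) * ((Y₂ ω i - m i) * (Y₂ ω j - m j))),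
      fun ω => (2:ℝ)⁻¹ * (((Y₁ ω k - m k) * (Y₁ ω j - m j)) * ((Y₂ ω i - m i) * (Y₂ ω k - m k))),
      fun ω => (-(4:ℝ)⁻¹) * ((Y₁ ω i - m i) * (Y₁ ω k - m k) * (Y₁ ω k - m k) * (Y₂ ω j - m j)),
      fun ω => (-(2:ℝ)⁻¹) * ((Y₁ ω i - m i) * (Y₁ ω k - m k) * (Y₁ ω j - m j) * (Y₂ ω k - m k)),
      fun ω => (-(4:ℝ)⁻¹) * ((Y₁ ω k - m k) * (Y₁ ω k - m k) * (Y₁ ω j - m j) * (Y₂ ω i - m i)),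
      fun ω => (-(4:ℝ)⁻¹) * ((Y₁ ω i - m i) * ((Y₂ ω k - m k) * (Y₂ ω k - m k) * (Y₂ ω j - m j))),
      fun ω => (-(2:ℝ)⁻¹) * ((Y₁ ω k - m k) * ((Y₂ ω i - m i) * (Y₂ ω k - m k) * (Y₂ ω j - m j))),
      fun ω => (-(4:ℝ)⁻¹) * ((Y₁ ω j - m j) * ((Y₂ ω i - m i) * (Y₂ ω k - m k) * (Y₂ ω k - m k))),
      fun ω => (-((2:ℝ)⁻¹ * S k j)) * ((Y₁ ω i - m i) * (Y₁ ω k - m k)),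
      fun ω => ((2:ℝ)⁻¹ * S k j) * ((Y₁ ω i - m i) * (Y₂ ω k - m k)),
      fun ω => ((2:ℝ)⁻¹ * S k j) * ((Y₁ ω k - m k) * (Y₂ ω i - m i)),
      fun ω => (-((2:ℝ)⁻¹ * S k j)) * ((Y₂ ω i - m i) * (Y₂ ω k - m k)),
      fun ω => (-((2:ℝ)⁻¹ * S i k)) * ((Y₁ ω k - m k) * (Y₁ ω j - m j)),
      fun ω => ((2:ℝ)⁻¹ * S i k) * ((Y₁ ω k - m k) * (Y₂ ω j - m j)),
      fun ω => ((2:ℝ)⁻¹ * S i k) * ((Y₁ ω j - m j) * (Y₂ ω k - m k)),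
      fun ω => (-((2:ℝ)⁻¹ * S i k)) * ((Y₂ ω k - m k) * (Y₂ ω j - m j)),
      fun _ => S i k * S k j] : List (Ω → ℝ)).map (fun f => f ω)).sum ∂μ := by rw [hpt]
      _ = (([fun ω => (4:ℝ)⁻¹ * (((Y₁ ω i - m i) * (Y₁ ω k - m k)) * ((Y₁ ω k - m k) * (Y₁ ω j - m j))),
      fun ω => (4:ℝ)⁻¹ * (((Y₂ ω i - m i) * (Y₂ ω k - m k)) * ((Y₂ ω k - m k) * (Y₂ ω j - m j))),
      fun ω => (2:ℝ)⁻¹ * (((Y₁ ω i - m i) * (Y₁ ω k - m k)) * ((Y₂ ω k - m k) * (Y₂ ω j - m j))),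
      fun ω => (4:ℝ)⁻¹ * (((Y₁ ω i - m i) * (Y₁ ω j - m j)) * ((Y₂ ω k - m k) * (Y₂ ω k - m k))),
      fun ω => (4:ℝ)⁻¹ * (((Y₁ ω k - m k) * (Y₁ ω k - m k)) * ((Y₂ ω i - m i) * (Y₂ ω j - m j))),
      fun ω => (2:ℝ)⁻¹ * (((Y₁ ω k - m k) * (Y₁ ω j - m j)) * ((Y₂ ω i - m i) * (Y₂ ω k - m k))),
      fun ω => (-(4:ℝ)⁻¹) * ((Y₁ ω i - m i) * (Y₁ ω k - m k) * (Y₁ ω k - m k) * (Y₂ ω j - m j)),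
      fun ω => (-(2:ℝ)⁻¹) * ((Y₁ ω i - m i) * (Y₁ ω k - m k) * (Y₁ ω j - m j) * (Y₂ ω k - m k)),
      fun ω => (-(4:ℝ)⁻¹) * ((Y₁ ω k - m k) * (Y₁ ω k - m k) * (Y₁ ω j - m j) * (Y₂ ω i - m i)),
      fun ω => (-(4:ℝ)⁻¹) * ((Y₁ ω i - m i) * ((Y₂ ω k - m k) * (Y₂ ω k - m k) * (Y₂ ω j - m j))),
      fun ω => (-(2:ℝ)⁻¹) * ((Y₁ ω k - m k) * ((Y₂ ω i - m i) * (Y₂ ω k - m k) * (Y₂ ω j - m j))),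
      fun ω => (-(4:ℝ)⁻¹) * ((Y₁ ω j - m j) * ((Y₂ ω i - m i) * (Y₂ ω k - m k) * (Y₂ ω k - m k))),
      fun ω => (-((2:ℝ)⁻¹ * S k j)) * ((Y₁ ω i - m i) * (Y₁ ω k - m k)),
      fun ω => ((2:ℝ)⁻¹ * S k j) * ((Y₁ ω i - m i) * (Y₂ ω k - m k)),
      fun ω => ((2:ℝ)⁻¹ * S k j) * ((Y₁ ω k - m k) * (Y₂ ω i - m i)),
      fun ω => (-((2:ℝ)⁻¹ * S k j)) * ((Y₂ ω i - m i) * (Y₂ ω k - m k)),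
      fun ω => (-((2:ℝ)⁻¹ * S i k)) * ((Y₁ ω k - m k) * (Y₁ ω j - m j)),
      fun ω => ((2:ℝ)⁻¹ * S i k) * ((Y₁ ω k - m k) * (Y₂ ω j - m j)),
      fun ω => ((2:ℝ)⁻¹ * S i k) * ((Y₁ ω j - m j) * (Y₂ ω k - m k)),
      fun ω => (-((2:ℝ)⁻¹ * S i k)) * ((Y₂ ω k - m k) * (Y₂ ω j - m j)),
      fun _ => S i k * S k j] : List (Ω → ℝ)).map (fun f => ∫ ω, f ω ∂μ)).sum := integral_list_sum _ hint
      _ = (2:ℝ)⁻¹ * (∫ ω, ((Y₁ ω i - m i) * (Y₁ ω k - m k)) * ((Y₁ ω k - m k) * (Y₁ ω j - m j)) ∂μ)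
          + (2:ℝ)⁻¹ * (S i j * S k k) := by
          simp only [List.map_cons, List.map_nil, List.sum_cons, List.sum_nil,
            integral_const_mul, q4Z, q22, q31, q13, q2Z, q11, m2,
            integral_const, measure_univ, probReal_univ, ENNReal.toReal_one, one_smul,
            mul_zero, zero_mul, add_zero, zero_add]
          ring
  -- integrability of the entries of (H - S) * (H - S)
  have hHmem : ∀ a b, MemLp (fun ω => H ω a b - S a b) 2 μ := by
    intro a b
    have h1 : MemLp (fun ω => Y₁ ω a - Y₂ ω a) 4 μ := (hL4 a).sub (hL4Y₂ a)
    have h2 : MemLp (fun ω => Y₁ ω b - Y₂ ω b) 4 μ := (hL4 b).sub (hL4Y₂ b)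
    have h3 := ((memℒp2_mul_of_memℒp4 h1 h2).const_mul ((2:ℝ)⁻¹)).sub
      (memLp_const (S a b))
    apply h3.ae_eq
    apply Filter.Eventually.of_forall
    intro ω
    simp [hH, Matrix.vecMulVec_apply, Matrix.smul_apply, Pi.sub_apply, smul_eq_mul]
  have hintk : ∀ k, Integrable (fun ω => (H ω i k - S i k) * (H ω k j - S k j)) μ :=
    fun k => integrable_mul_of_memℒp2 (hHmem i k) (hHmem k j)
  have lhs_eq : ∫ ω, ((H ω - S) * (H ω - S)) i j ∂μ
      = ∑ k, ∫ ω, (H ω i k - S i k) * (H ω k j - S k j) ∂μ := by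
    rw [← integral_finset_sum _ (fun k _ => hintk k)]
    congr 1
  have rhs_eq : ∫ ω, (Matrix.vecMulVec (Y₁ ω - m) (Y₁ ω - m) *
        Matrix.vecMulVec (Y₁ ω - m) (Y₁ ω - m)) i j ∂μ
      = ∑ k, ∫ ω, ((Y₁ ω i - m i) * (Y₁ ω k - m k)) * ((Y₁ ω k - m k) * (Y₁ ω j - m j)) ∂μ := by
    rw [← integral_finset_sum _
      (fun k _ => integrable_mul4 (hL4X i) (hL4X k) (hL4X k) (hL4X j))]
    congr 1
  rw [lhs_eq, rhs_eq]
  simp only [hk]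
  have htr : S.trace = ∑ k, S k k := by simp [Matrix.trace, Matrix.diag]
  rw [htr, Finset.sum_add_distrib, ← Finset.mul_sum, ← Finset.mul_sum, ← Finset.mul_sum]
  ring
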